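/- For any m ≥ 2 and a₁ ∈ (0, 3/2], one has |∫_{a₁}^∞ n² / ((m² − n²)(n² + 1)) dn| ≤ C/m² for an absolute constant C, where the integral is a principal value around n = m. -/

import Mathlib

open MeasureTheory Real Filter

noncomputable def Fa (m n : ℝ) : ℝ :=
  ((m/2) * (Real.log (m+n) - Real.log (m-n)) - Real.arctan n) / (m^2+1)

lemma hasDerivAt_Fa (m n : ℝ) (h1 : m + n ≠ 0) (h2 : m - n ≠ 0) :
    HasDerivAt (Fa m) (n^2 / ((m^2 - n^2) * (n^2+1))) n := by
  have d1 : HasDerivAt (fun x : ℝ => Real.log (m+x)) (m+n)⁻¹ n := by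
    simpa [Function.comp_def] using (Real.hasDerivAt_log h1).comp n ((hasDerivAt_id n).const_add m)
  have d2 : HasDerivAt (fun x : ℝ => Real.log (m-x)) ((m-n)⁻¹ * (-1)) n := by
    have := (Real.hasDerivAt_log h2).comp n ((hasDerivAt_id n).neg.const_add m)
    simpa [Function.comp_def] using this
  have d3 : HasDerivAt Real.arctan (1/(1+n^2)) n := Real.hasDerivAt_arctan n
  have := (((d1.sub d2).const_mul (m/2)).sub d3).div_const (m^2+1)
  refine this.congr_deriv ?_
  have h3 : (1:ℝ) + n^2 ≠ 0 := by positivity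
  have h4 : (m:ℝ)^2 + 1 ≠ 0 := by positivity
  have h5 : m^2 - n^2 ≠ 0 := by
    intro h; exact mul_ne_zero h2 h1 (by nlinarith)
  field_simp
  ring

lemma integral_Fa (m a b : ℝ) (hab : a ≤ b)
    (h : ∀ n ∈ Set.Icc a b, m + n ≠ 0 ∧ m - n ≠ 0) :
    ∫ n in a..b, n^2 / ((m^2-n^2)*(n^2+1)) = Fa m b - Fa m a := by
  apply intervalIntegral.integral_eq_sub_of_hasDerivAt
  · intro n hn
    rw [Set.uIcc_of_le hab] at hn
    exact hasDerivAt_Fa m n (h n hn).1 (h n hn).2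
  · apply ContinuousOn.intervalIntegrable
    apply ContinuousOn.div (by fun_prop) (by fun_prop)
    intro n hn
    rw [Set.uIcc_of_le hab] at hn
    obtain ⟨h1, h2⟩ := h n hn
    have h5 : m^2 - n^2 ≠ 0 := by intro h; exact mul_ne_zero h2 h1 (by nlinarith)
    exact mul_ne_zero h5 (by positivity)

theorem stmt11 :
    ∃ C > 0, ∀ m a₁ : ℝ, 2 ≤ m → 0 < a₁ → a₁ ≤ 3/2 →
      ∃ I : ℝ,
        Filter.Tendsto
          (fun p : ℝ × ℝ =>
            (∫ n in a₁..(m - p.1), n ^ 2 / ((m ^ 2 - n ^ 2) * (n ^ 2 + 1))) +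
            ∫ n in (m + p.1)..p.2, n ^ 2 / ((m ^ 2 - n ^ 2) * (n ^ 2 + 1)))
          ((nhdsWithin 0 (Set.Ioi 0)) ×ˢ Filter.atTop) (nhds I) ∧
        |I| ≤ C / m ^ 2 := by
  refine ⟨8, by norm_num, ?_⟩
  intro m a₁ hm ha0 ha1
  have hm0 : (0:ℝ) < m := by linarith
  have hd : (0:ℝ) < m^2 + 1 := by positivity
  set I : ℝ := -(π/2)/(m^2+1) - Fa m a₁ with hI
  refine ⟨I, ?_, ?_⟩
  · -- Tendsto
    -- A component
    have hA : ∀ ε : ℝ, Fa m (m-ε) - Fa m (m+ε) =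
        ((m/2)*(Real.log (2*m-ε) - Real.log (2*m+ε)) - Real.arctan (m-ε)
          + Real.arctan (m+ε))/(m^2+1) := by
      intro ε
      unfold Fa
      rw [show m + (m-ε) = 2*m - ε by ring, show m - (m-ε) = ε by ring,
          show m + (m+ε) = 2*m + ε by ring, show m - (m+ε) = -ε by ring,
          Real.log_neg_eq_log]
      ring
    have tA : Tendsto (fun ε : ℝ => Fa m (m-ε) - Fa m (m+ε))
        (nhdsWithin 0 (Set.Ioi 0)) (nhds 0) := by
      have c1 : ContinuousAt (fun ε : ℝ =>
          ((m/2)*(Real.log (2*m-ε) - Real.log (2*m+ε)) - Real.arctan (m-ε)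
            + Real.arctan (m+ε))/(m^2+1)) 0 := by
        apply ContinuousAt.div _ continuousAt_const (by positivity)
        apply ContinuousAt.add
        · apply ContinuousAt.sub
          · apply ContinuousAt.mul continuousAt_const
            apply ContinuousAt.sub
            · exact (Real.continuousAt_log (by norm_num; positivity)).comp
                (by fun_prop)
            · exact (Real.continuousAt_log (by norm_num; positivity)).comp
                (by fun_prop)
          · exact Real.continuous_arctan.continuousAt.comp (by fun_prop)
        · exact Real.continuous_arctan.continuousAt.comp (by fun_prop)
      have t0 := c1.tendsto.mono_left (nhdsWithin_le_nhds (s := Set.Ioi (0:ℝ)))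
      have hval : ((m/2)*(Real.log (2*m-0) - Real.log (2*m+0)) - Real.arctan (m-0)
            + Real.arctan (m+0))/(m^2+1) = 0 := by norm_num
      rw [hval] at t0
      exact t0.congr (fun ε => (hA ε).symm)
    -- B component
    have tB : Tendsto (fun b : ℝ => Fa m b) atTop (nhds (-(π/2)/(m^2+1))) := by
      have hratio : Tendsto (fun b : ℝ => (m+b)/(b-m)) atTop (nhds 1) := by
        have hb : Tendsto (fun b : ℝ => b - m) atTop atTop :=
          tendsto_atTop_add_const_right _ (-m) tendsto_id
        have h0 : Tendsto (fun b : ℝ => 2*m/(b-m)) atTop (nhds 0) :=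
          Tendsto.div_atTop tendsto_const_nhds hb
        have h1 : Tendsto (fun b : ℝ => 1 + 2*m/(b-m)) atTop (nhds 1) := by
          simpa using (tendsto_const_nhds (x := (1:ℝ))).add h0
        apply h1.congr'
        filter_upwards [eventually_gt_atTop m] with b hb'
        have : b - m ≠ 0 := by linarith
        field_simp
        ring
      have hlog : Tendsto (fun b : ℝ => Real.log (m+b) - Real.log (m-b))
          atTop (nhds 0) := by
        have t1 := (Real.continuousAt_log one_ne_zero).tendsto.comp hratio
        rw [Real.log_one] at t1
        apply t1.congr'
        filter_upwards [eventually_gt_atTop m] with b hb'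
        have hmb : (0:ℝ) < m + b := by linarith
        have hbm : (0:ℝ) < b - m := by linarith
        show Real.log ((m+b)/(b-m)) = Real.log (m+b) - Real.log (m-b)
        rw [Real.log_div hmb.ne' hbm.ne', show m - b = -(b-m) by ring,
          Real.log_neg_eq_log]
      have harct : Tendsto Real.arctan atTop (nhds (π/2)) :=
        Real.tendsto_arctan_atTop.mono_right nhdsWithin_le_nhds
      have := ((hlog.const_mul (m/2)).sub harct).div_const (m^2+1)
      simp only [mul_zero, zero_sub] at this
      exact this
    have tG : Tendsto (fun p : ℝ × ℝ =>
        (Fa m (m - p.1) - Fa m (m + p.1)) + (Fa m p.2 - Fa m a₁))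
        ((nhdsWithin 0 (Set.Ioi 0)) ×ˢ atTop) (nhds I) := by
      have := (tA.comp tendsto_fst).add ((tB.sub_const (Fa m a₁)).comp tendsto_snd)
      simpa [hI] using this
    -- eventual equality
    have key : ∀ᶠ p : ℝ × ℝ in (nhdsWithin 0 (Set.Ioi 0)) ×ˢ atTop,
        ((∫ n in a₁..(m - p.1), n ^ 2 / ((m ^ 2 - n ^ 2) * (n ^ 2 + 1))) +
            ∫ n in (m + p.1)..p.2, n ^ 2 / ((m ^ 2 - n ^ 2) * (n ^ 2 + 1))) =
        ((Fa m (m - p.1) - Fa m (m + p.1)) + (Fa m p.2 - Fa m a₁)) := by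
      have e1 : ∀ᶠ ε : ℝ in nhdsWithin 0 (Set.Ioi 0), ε ∈ Set.Ioo 0 (1/2) := by
        have : Set.Ioo (0:ℝ) (1/2) ∈ nhdsWithin 0 (Set.Ioi 0) :=
          Ioo_mem_nhdsGT_of_mem (by norm_num)
        exact eventually_of_mem this (fun x hx => hx)
      have e2 : ∀ᶠ b : ℝ in atTop, m + 1 ≤ b := eventually_ge_atTop _
      filter_upwards [e1.prod_inl atTop, e2.prod_inr (nhdsWithin 0 (Set.Ioi 0))]
        with p h1 h2
      obtain ⟨hε0, hεh⟩ := h1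
      rw [integral_Fa m a₁ (m - p.1) (by linarith)
          (fun n hn => ⟨by nlinarith [hn.1, hn.2], by nlinarith [hn.1, hn.2]⟩),
        integral_Fa m (m + p.1) p.2 (by linarith)
          (fun n hn => ⟨by nlinarith [hn.1, hn.2], by nlinarith [hn.1, hn.2]⟩)]
      ring
    exact tG.congr' (key.mono fun p hp => hp.symm)
  · -- bound
    set L : ℝ := Real.log (m+a₁) - Real.log (m-a₁) with hL
    have hma : (0:ℝ) < m - a₁ := by linarith
    have hIval : I = (-(π/2) - (m/2)*L + Real.arctan a₁)/(m^2+1) := by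
      simp only [hI, Fa, hL]; ring
    have hL0 : 0 ≤ L := by
      have := Real.log_le_log hma (by linarith : m - a₁ ≤ m + a₁)
      linarith
    have hL6 : (m/2)*L ≤ 6 := by
      have hpos : (0:ℝ) < (m+a₁)/(m-a₁) := by positivity
      have h1 : L ≤ (m+a₁)/(m-a₁) - 1 := by
        have := Real.log_le_sub_one_of_pos hpos
        rw [Real.log_div (by positivity : (0:ℝ) < m+a₁).ne' hma.ne'] at this
        rw [hL]; exact this
      have h2 : (m+a₁)/(m-a₁) - 1 = 2*a₁/(m-a₁) := by field_simp; ring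
      rw [h2] at h1
      have h3 : m * (2*a₁/(m-a₁)) ≤ 12 := by
        rw [mul_div_assoc'] 
        rw [div_le_iff₀ hma]
        nlinarith
      nlinarith
    have har1 : 0 < Real.arctan a₁ := by
      have := Real.arctan_strictMono ha0
      rwa [Real.arctan_zero] at this
    have har2 : Real.arctan a₁ < π/2 := Real.arctan_lt_pi_div_two a₁
    have hm2 : (0:ℝ) < m^2 := by positivity
    have hpi : π ≤ 4 := by linarith [Real.pi_le_four]
    rw [abs_le]
    constructor
    · rw [hIval]
      have hnum : (-8:ℝ) ≤ -(π/2) - (m/2)*L + Real.arctan a₁ := by nlinarith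
      have s0 : (8:ℝ)/(m^2+1) ≤ 8/m^2 := by
        gcongr
        · linarith
      have s2 : (-8:ℝ)/(m^2+1) ≤ (-(π/2) - (m/2)*L + Real.arctan a₁)/(m^2+1) := by
        gcongr
      have s1 : -(8/m^2) ≤ (-8:ℝ)/(m^2+1) := by rw [neg_div]; linarith
      linarith
    · rw [hIval]
      have hnum : -(π/2) - (m/2)*L + Real.arctan a₁ ≤ 0 := by nlinarith
      have h1 : (-(π/2) - (m/2)*L + Real.arctan a₁)/(m^2+1) ≤ 0 :=
        div_nonpos_of_nonpos_of_nonneg hnum (by positivity)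
      have h2 : (0:ℝ) ≤ 8/m^2 := by positivity
      linarith
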